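/- Let k = (k1,...,k6) ∈ ℕ^6 be the angle vector of a small corona in a compact packing with disc sizes 0 < s < r < 1, i.e., k1·∠(1,s,1) + k2·∠(1,s,r) + k3·∠(1,s,s) + k4·∠(r,s,r) + k5·∠(r,s,s) + k6·∠(s,s,s) = 2π. Then, unless the corona is ssssss, we have k1+k2+k3+k4+k5+k6 < 6 and 3k1 + 3k2 + (3/2)k3 + 3k4 + (3/2)k5 + k6 > 6. -/

import Mathlib

/-- The angle at the center of the disc of radius `c` in the triangle of centers of three
pairwise externally tangent discs of radii `x`, `c`, `y` (law of cosines). -/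
noncomputable def contactAngle (x c y : ℝ) : ℝ :=
  Real.arccos (((x+c)^2 + (y+c)^2 - (x+y)^2) / (2*(x+c)*(y+c)))

open Real

private lemma ca_eq (x c y : ℝ) (hx : 0 < x) (hc : 0 < c) (hy : 0 < y) :
    contactAngle x c y = arccos (1 - 2*x*y/((x+c)*(y+c))) := by
  unfold contactAngle
  congr 1
  have h1 : (0:ℝ) < x + c := by linarith
  have h2 : (0:ℝ) < y + c := by linarith
  field_simp
  ring

private lemma ca_arg_gt (x c y : ℝ) (hx : 0 < x) (hc : 0 < c) (hy : 0 < y) :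
    -1 < 1 - 2*x*y/((x+c)*(y+c)) := by
  have h1 : (0:ℝ) < x + c := by linarith
  have h2 : (0:ℝ) < y + c := by linarith
  have hD : (0:ℝ) < (x+c)*(y+c) := mul_pos h1 h2
  have h : 2*x*y/((x+c)*(y+c)) < 2 := by
    rw [div_lt_iff₀ hD]; nlinarith
  linarith

private lemma ca_lt_pi (x c y : ℝ) (hx : 0 < x) (hc : 0 < c) (hy : 0 < y) :
    contactAngle x c y < π := by
  rw [ca_eq x c y hx hc hy]
  refine lt_of_le_of_ne (arccos_le_pi _) fun h => ?_
  have := arccos_eq_pi.mp h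
  have := ca_arg_gt x c y hx hc hy
  linarith

private lemma ca_lt_pi_div_two (x c : ℝ) (hx : 0 < x) (hc : 0 < c) :
    contactAngle x c c < π / 2 := by
  rw [ca_eq x c c hx hc hc]
  rw [arccos_lt_pi_div_two]
  have h1 : (0:ℝ) < x + c := by linarith
  have h2 : (0:ℝ) < c + c := by linarith
  have hD : (0:ℝ) < (x+c)*(c+c) := mul_pos h1 h2
  rw [sub_pos, div_lt_one hD]
  nlinarith

private lemma arccos_one_half' : arccos (1/2 : ℝ) = π / 3 :=
  arccos_eq_of_eq_cos (by positivity) (by linarith [pi_pos]) (by rw [cos_pi_div_three])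

private lemma ca_gt_pi_div_three (x c y : ℝ) (hc : 0 < c) (hcx : c < x) (hcy : c ≤ y) :
    π / 3 < contactAngle x c y := by
  have hx : 0 < x := hc.trans hcx
  have hy : 0 < y := lt_of_lt_of_le hc hcy
  rw [ca_eq x c y hx hc hy, ← arccos_one_half']
  have h1 : (0:ℝ) < x + c := by linarith
  have h2 : (0:ℝ) < y + c := by linarith
  have hD : (0:ℝ) < (x+c)*(y+c) := mul_pos h1 h2
  have harg : 1 - 2*x*y/((x+c)*(y+c)) < 1/2 := by
    rw [sub_lt_iff_lt_add', ← sub_lt_iff_lt_add, show (1:ℝ) - 1/2 = 1/2 by norm_num,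
      lt_div_iff₀ hD]
    nlinarith
  have hgt := ca_arg_gt x c y hx hc hy
  exact strictAntiOn_arccos ⟨by linarith, by linarith⟩ (by norm_num) harg

private lemma ca_sss (s : ℝ) (hs : 0 < s) : contactAngle s s s = π / 3 := by
  rw [ca_eq s s s hs hs hs, ← arccos_one_half']
  congr 1
  have h : (s+s)*(s+s) = 4*s^2 := by ring
  rw [h]
  have : s^2 ≠ 0 := by positivity
  field_simp
  ring

theorem stmt_11 (r s : ℝ) (hs : 0 < s) (hsr : s < r) (hr : r < 1)
    (k1 k2 k3 k4 k5 k6 : ℕ)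
    (hsum : (k1:ℝ) * contactAngle 1 s 1 + k2 * contactAngle 1 s r +
      k3 * contactAngle 1 s s + k4 * contactAngle r s r +
      k5 * contactAngle r s s + k6 * contactAngle s s s = 2 * Real.pi)
    (hne : ¬ (k1 = 0 ∧ k2 = 0 ∧ k3 = 0 ∧ k4 = 0 ∧ k5 = 0 ∧ k6 = 6)) :
    (k1 : ℝ) + k2 + k3 + k4 + k5 + k6 < 6 ∧
    3*(k1:ℝ) + 3*k2 + (3/2)*k3 + 3*k4 + (3/2)*k5 + k6 > 6 := by
  have hr0 : 0 < r := hs.trans hsr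
  have hs1 : s < 1 := hsr.trans hr
  have hpi := pi_pos
  set θ1 := contactAngle 1 s 1 with hθ1
  set θ2 := contactAngle 1 s r with hθ2
  set θ3 := contactAngle 1 s s with hθ3
  set θ4 := contactAngle r s r with hθ4
  set θ5 := contactAngle r s s with hθ5
  set θ6 := contactAngle s s s with hθ6
  have e6 : θ6 = π / 3 := ca_sss s hs
  have g1 : π / 3 < θ1 := ca_gt_pi_div_three 1 s 1 hs hs1 hs1.le
  have g2 : π / 3 < θ2 := ca_gt_pi_div_three 1 s r hs hs1 hsr.le
  have g3 : π / 3 < θ3 := ca_gt_pi_div_three 1 s s hs hs1 le_rfl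
  have g4 : π / 3 < θ4 := ca_gt_pi_div_three r s r hs hsr hsr.le
  have g5 : π / 3 < θ5 := ca_gt_pi_div_three r s s hs hsr le_rfl
  have u1 : θ1 < π := ca_lt_pi 1 s 1 one_pos hs one_pos
  have u2 : θ2 < π := ca_lt_pi 1 s r one_pos hs hr0
  have u3 : θ3 < π / 2 := ca_lt_pi_div_two 1 s one_pos hs
  have u4 : θ4 < π := ca_lt_pi r s r hr0 hs hr0
  have u5 : θ5 < π / 2 := ca_lt_pi_div_two r s hr0 hs
  have hk1 : (0:ℝ) ≤ (k1:ℝ) := Nat.cast_nonneg _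
  have hk2 : (0:ℝ) ≤ (k2:ℝ) := Nat.cast_nonneg _
  have hk3 : (0:ℝ) ≤ (k3:ℝ) := Nat.cast_nonneg _
  have hk4 : (0:ℝ) ≤ (k4:ℝ) := Nat.cast_nonneg _
  have hk5 : (0:ℝ) ≤ (k5:ℝ) := Nat.cast_nonneg _
  -- weak bounds
  have wl1 : (k1:ℝ)*(π/3) ≤ (k1:ℝ)*θ1 := mul_le_mul_of_nonneg_left g1.le hk1
  have wl2 : (k2:ℝ)*(π/3) ≤ (k2:ℝ)*θ2 := mul_le_mul_of_nonneg_left g2.le hk2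
  have wl3 : (k3:ℝ)*(π/3) ≤ (k3:ℝ)*θ3 := mul_le_mul_of_nonneg_left g3.le hk3
  have wl4 : (k4:ℝ)*(π/3) ≤ (k4:ℝ)*θ4 := mul_le_mul_of_nonneg_left g4.le hk4
  have wl5 : (k5:ℝ)*(π/3) ≤ (k5:ℝ)*θ5 := mul_le_mul_of_nonneg_left g5.le hk5
  have wu1 : (k1:ℝ)*θ1 ≤ (k1:ℝ)*π := mul_le_mul_of_nonneg_left u1.le hk1
  have wu2 : (k2:ℝ)*θ2 ≤ (k2:ℝ)*π := mul_le_mul_of_nonneg_left u2.le hk2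
  have wu3 : (k3:ℝ)*θ3 ≤ (k3:ℝ)*(π/2) := mul_le_mul_of_nonneg_left u3.le hk3
  have wu4 : (k4:ℝ)*θ4 ≤ (k4:ℝ)*π := mul_le_mul_of_nonneg_left u4.le hk4
  have wu5 : (k5:ℝ)*θ5 ≤ (k5:ℝ)*(π/2) := mul_le_mul_of_nonneg_left u5.le hk5
  have e6' : (k6:ℝ)*θ6 = (k6:ℝ)*(π/3) := by rw [e6]
  by_cases hz : k1 = 0 ∧ k2 = 0 ∧ k3 = 0 ∧ k4 = 0 ∧ k5 = 0
  · obtain ⟨h1, h2, h3, h4, h5⟩ := hz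
    subst h1; subst h2; subst h3; subst h4; subst h5
    simp only [Nat.cast_zero, zero_mul, zero_add] at hsum
    rw [e6] at hsum
    have h6 : (k6:ℝ) = 6 := by
      have : (k6:ℝ) * (π/3) = 6 * (π/3) := by linarith
      exact mul_right_cancel₀ (by positivity) this
    exact absurd ⟨rfl, rfl, rfl, rfl, rfl, by exact_mod_cast h6⟩ hne
  · have hj : 1 ≤ k1 ∨ 1 ≤ k2 ∨ 1 ≤ k3 ∨ 1 ≤ k4 ∨ 1 ≤ k5 := by omega
    -- strict versions of the summed bounds
    have key : (k1:ℝ)*(π/3) + k2*(π/3) + k3*(π/3) + k4*(π/3) + k5*(π/3) + k6*(π/3) < 2*π ∧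
        2*π < (k1:ℝ)*π + k2*π + k3*(π/2) + k4*π + k5*(π/2) + k6*(π/3) := by
      rcases hj with h | h | h | h | h
      · have hp : (0:ℝ) < k1 := by exact_mod_cast h
        have sl : (k1:ℝ)*(π/3) < (k1:ℝ)*θ1 := (mul_lt_mul_iff_right₀ hp).mpr g1
        have su : (k1:ℝ)*θ1 < (k1:ℝ)*π := (mul_lt_mul_iff_right₀ hp).mpr u1
        constructor <;> linarith
      · have hp : (0:ℝ) < k2 := by exact_mod_cast h
        have sl : (k2:ℝ)*(π/3) < (k2:ℝ)*θ2 := (mul_lt_mul_iff_right₀ hp).mpr g2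
        have su : (k2:ℝ)*θ2 < (k2:ℝ)*π := (mul_lt_mul_iff_right₀ hp).mpr u2
        constructor <;> linarith
      · have hp : (0:ℝ) < k3 := by exact_mod_cast h
        have sl : (k3:ℝ)*(π/3) < (k3:ℝ)*θ3 := (mul_lt_mul_iff_right₀ hp).mpr g3
        have su : (k3:ℝ)*θ3 < (k3:ℝ)*(π/2) := (mul_lt_mul_iff_right₀ hp).mpr u3
        constructor <;> linarith
      · have hp : (0:ℝ) < k4 := by exact_mod_cast h
        have sl : (k4:ℝ)*(π/3) < (k4:ℝ)*θ4 := (mul_lt_mul_iff_right₀ hp).mpr g4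
        have su : (k4:ℝ)*θ4 < (k4:ℝ)*π := (mul_lt_mul_iff_right₀ hp).mpr u4
        constructor <;> linarith
      · have hp : (0:ℝ) < k5 := by exact_mod_cast h
        have sl : (k5:ℝ)*(π/3) < (k5:ℝ)*θ5 := (mul_lt_mul_iff_right₀ hp).mpr g5
        have su : (k5:ℝ)*θ5 < (k5:ℝ)*(π/2) := (mul_lt_mul_iff_right₀ hp).mpr u5
        constructor <;> linarith
    obtain ⟨klow, kup⟩ := key
    have h3pos : (0:ℝ) < π/3 := by positivity
    constructor
    · have heq : ((k1:ℝ) + k2 + k3 + k4 + k5 + k6) * (π/3)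
          = (k1:ℝ)*(π/3) + k2*(π/3) + k3*(π/3) + k4*(π/3) + k5*(π/3) + k6*(π/3) := by ring
      have h' : ((k1:ℝ) + k2 + k3 + k4 + k5 + k6) * (π/3) < 6 * (π/3) := by linarith
      exact (mul_lt_mul_iff_left₀ h3pos).mp h'
    · have heq : (3*(k1:ℝ) + 3*k2 + (3/2)*k3 + 3*k4 + (3/2)*k5 + k6) * (π/3)
          = (k1:ℝ)*π + k2*π + k3*(π/2) + k4*π + k5*(π/2) + k6*(π/3) := by ring
      have h' : 6 * (π/3) < (3*(k1:ℝ) + 3*k2 + (3/2)*k3 + 3*k4 + (3/2)*k5 + k6) * (π/3) := by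
        linarith
      exact (mul_lt_mul_iff_left₀ h3pos).mp h'
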